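/- Let G be a finite simple graph with vertex set V = {1,…,n}, edge set E, and stability number α(G), let r ≥ 1, and let A, (Q_i), (Q_{ij}) be a reduced Nullstellensatz certificate 1 = A·(−(α(G)+r) + Σ_{i=1}^n x_i) + Σ_{i∈V} Q_i·(x_i² − x_i) + Σ_{{i,j}∈E} Q_{ij}·x_i·x_j (every monomial of A is square-free with support a stable set of G). Let M be a maximal stable set of G and let {c_1,…,c_{k+1}} be any (k+1)-element subset of M with k < |M|. If the monomial x_{c_1}·x_{c_2}·⋯·x_{c_k} appears in A with a non-zero coefficient, then the monomial x_{c_1}·x_{c_2}·⋯·x_{c_k}·x_{c_{k+1}} also appears in A with a non-zero coefficient. -/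

import Mathlib

open Finset MvPolynomial

/-- The edge set of `G`, as ordered pairs `(i, j)` with `i < j`. -/
def edgePairs {n : ℕ} (G : SimpleGraph (Fin n)) [DecidableRel G.Adj] :
    Finset (Fin n × Fin n) :=
  Finset.univ.filter fun p => p.1 < p.2 ∧ G.Adj p.1 p.2

/-- A finset of vertices is stable (independent) if no two of its members are adjacent. -/
def IsStableSet {n : ℕ} (G : SimpleGraph (Fin n)) (S : Finset (Fin n)) : Prop :=
  ∀ i ∈ S, ∀ j ∈ S, ¬ G.Adj i j

/-- The stability number `α(G)`: the maximum size of a stable set of `G`. -/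
def stabilityNumber {n : ℕ} (G : SimpleGraph (Fin n)) [DecidableRel G.Adj] : ℕ :=
  (Finset.univ.powerset.filter fun S => ∀ i ∈ S, ∀ j ∈ S, ¬ G.Adj i j).sup Finset.card

/-- The Nullstellensatz certificate identity
`1 = A(−(α(G)+r) + Σ x_i) + Σ_i Q_i (x_i² − x_i) + Σ_{{i,j}∈E} Q_{ij} x_i x_j`
for the non-existence of a stable set of size `α(G) + r`. -/
def IsStableCert {n : ℕ} (G : SimpleGraph (Fin n)) [DecidableRel G.Adj] (r : ℕ)
    (A : MvPolynomial (Fin n) ℂ) (Q : Fin n → MvPolynomial (Fin n) ℂ)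
    (Qe : Fin n × Fin n → MvPolynomial (Fin n) ℂ) : Prop :=
  (1 : MvPolynomial (Fin n) ℂ) =
    A * ((∑ i : Fin n, X i) - C ((stabilityNumber G + r : ℕ) : ℂ)) +
    (∑ i : Fin n, Q i * (X i ^ 2 - X i)) +
    ∑ p ∈ edgePairs G, Qe p * (X p.1 * X p.2)

/-- The degree of a certificate: `max{deg A, deg Q_i, deg Q_{ij}}` (total degrees). -/
def stableCertDeg {n : ℕ} (G : SimpleGraph (Fin n)) [DecidableRel G.Adj]
    (A : MvPolynomial (Fin n) ℂ) (Q : Fin n → MvPolynomial (Fin n) ℂ)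
    (Qe : Fin n × Fin n → MvPolynomial (Fin n) ℂ) : ℕ :=
  max A.totalDegree
    (max (Finset.univ.sup fun i => (Q i).totalDegree)
      ((edgePairs G).sup fun p => (Qe p).totalDegree))

/-- A certificate is reduced when every monomial of `A` is square-free and its support
is a stable set of `G`. -/
def IsReducedCoeff {n : ℕ} (G : SimpleGraph (Fin n)) (A : MvPolynomial (Fin n) ℂ) : Prop :=
  ∀ m ∈ A.support, (∀ i : Fin n, m i ≤ 1) ∧ IsStableSet G m.support

/-- The square-free exponent vector `∏_{v ∈ S} x_v` associated with a finset `S`. -/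
noncomputable def expOf {n : ℕ} (S : Finset (Fin n)) : Fin n →₀ ℕ :=
  ∑ v ∈ S, Finsupp.single v 1

/-- In a reduced Nullstellensatz certificate for the non-existence of a
stable set of size `α(G) + r`: if `M` is a maximal stable set, `T ⊆ M`, and `v ∈ M \ T`,
and the square-free monomial `∏_{u ∈ T} x_u` appears in `A` with non-zero coefficient,
then `∏_{u ∈ T ∪ {v}} x_u` also appears in `A` with non-zero coefficient. -/

noncomputable def Sb (k : ℕ) (c : ℂ) : ℂ :=
  ∑ j ∈ Finset.range (k+1), (-1)^j * (k.choose j : ℂ) / ((j:ℂ) - c)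

noncomputable def Pb (k : ℕ) (c : ℂ) : ℂ :=
  ∏ j ∈ Finset.range (k+1), ((j:ℂ) - c)

lemma Pb_succ (k : ℕ) (c : ℂ) : Pb (k+1) c = Pb k c * (((k+1 : ℕ):ℂ) - c) := by
  simp [Pb, Finset.prod_range_succ]

lemma Pb_shift (k : ℕ) (c : ℂ) : Pb (k+1) c = (0 - c) * Pb k (c-1) := by
  rw [Pb, Finset.prod_range_succ', Pb, mul_comm]
  congr 1
  · norm_num
  · exact Finset.prod_congr rfl fun i _ => by push_cast; ring

lemma Sb_rec (k : ℕ) (c : ℂ) : Sb (k+1) c = Sb k c - Sb k (c-1) := by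
  have h1 : Sb (k+1) c
      = (∑ i ∈ Finset.range (k+1), (-1)^(i+1) * (((k+1).choose (i+1) : ℕ) : ℂ) / (((i+1:ℕ):ℂ) - c))
        + (-1)^0 * ((k+1).choose 0 : ℂ) / (((0:ℕ):ℂ) - c) := by
    rw [Sb, Finset.sum_range_succ']
  have h2 : ∀ i ∈ Finset.range (k+1),
      (-1:ℂ)^(i+1) * (((k+1).choose (i+1) : ℕ) : ℂ) / (((i+1:ℕ):ℂ) - c)
      = -((-1)^i * (k.choose i : ℂ) / ((i:ℂ) - (c-1)))
        + (-1)^(i+1) * (k.choose (i+1) : ℂ) / (((i+1:ℕ):ℂ) - c) := by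
    intro i _
    rw [Nat.choose_succ_succ]
    push_cast
    have h : ((i:ℂ) - (c-1)) = ((i:ℂ) + 1 - c) := by ring
    rw [h]
    ring
  have h3 : (∑ i ∈ Finset.range (k+1), (-1:ℂ)^(i+1) * (k.choose (i+1) : ℂ) / (((i+1:ℕ):ℂ) - c))
      = ∑ i ∈ Finset.range k, (-1:ℂ)^(i+1) * (k.choose (i+1) : ℂ) / (((i+1:ℕ):ℂ) - c) := by
    rw [Finset.sum_range_succ, Nat.choose_succ_self]
    simp
  have h4 : Sb k c = (∑ i ∈ Finset.range k, (-1:ℂ)^(i+1) * (k.choose (i+1) : ℂ) / (((i+1:ℕ):ℂ) - c))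
        + (-1)^0 * (k.choose 0 : ℂ) / (((0:ℕ):ℂ) - c) := by
    rw [Sb, Finset.sum_range_succ']
  have h5 : Sb k (c-1) = ∑ j ∈ Finset.range (k+1), (-1:ℂ)^j * (k.choose j : ℂ) / ((j:ℂ) - (c-1)) := rfl
  rw [h1, Finset.sum_congr rfl h2, Finset.sum_add_distrib, h3, Finset.sum_neg_distrib, ← h5, h4]
  simp only [Nat.choose_zero_right, Nat.cast_one, Nat.cast_zero, pow_zero]
  ring

lemma key (k : ℕ) : ∀ c : ℂ, (∀ j : ℕ, j ≤ k → (j:ℂ) ≠ c) → Sb k c * Pb k c = (Nat.factorial k : ℂ) := by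
  induction k with
  | zero =>
    intro c hc
    have h0 : c ≠ 0 := fun h => hc 0 le_rfl (by simp [h])
    simp only [Sb, Pb, zero_add, Nat.choose_zero_right, Nat.factorial_zero, Nat.cast_zero, Finset.range_one, Finset.sum_singleton, Finset.prod_singleton]
    field_simp
  | succ k ih =>
    intro c hc
    have hc1 : ∀ j : ℕ, j ≤ k → (j:ℂ) ≠ c := fun j hj => hc j (hj.trans (Nat.le_succ k))
    have hc2 : ∀ j : ℕ, j ≤ k → (j:ℂ) ≠ c - 1 := by
      intro j hj h
      have : ((j+1:ℕ):ℂ) = c := by push_cast; rw [h]; ring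
      exact hc (j+1) (Nat.succ_le_succ hj) this
    rw [Sb_rec, sub_mul, Pb_succ]
    have e1 : Sb k c * (Pb k c * (((k+1:ℕ):ℂ) - c)) = (Nat.factorial k : ℂ) * (((k+1:ℕ):ℂ) - c) := by
      rw [← mul_assoc, ih c hc1]
    have e2 : Pb k c * (((k+1:ℕ):ℂ) - c) = (0 - c) * Pb k (c-1) := by
      rw [← Pb_succ, Pb_shift]
    have e3 : Sb k (c-1) * (Pb k c * (((k+1:ℕ):ℂ) - c)) = (Nat.factorial k : ℂ) * (0 - c) := by
      rw [e2, mul_comm (0-c) (Pb k (c-1)), ← mul_assoc, ih (c-1) hc2]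
    rw [e1, e3, Nat.factorial_succ]
    push_cast
    ring


noncomputable def ind {n : ℕ} (W : Finset (Fin n)) : Fin n → ℂ :=
  fun i => if i ∈ W then 1 else 0

lemma expOf_apply {n : ℕ} (S : Finset (Fin n)) (i : Fin n) :
    expOf S i = if i ∈ S then 1 else 0 := by
  classical
  rw [expOf, Finset.sum_apply']
  simp [Finsupp.single_apply]

lemma expOf_support {n : ℕ} (S : Finset (Fin n)) : (expOf S).support = S := by
  classical
  ext i
  simp [Finsupp.mem_support_iff, expOf_apply]

lemma eq_expOf {n : ℕ} (d : Fin n →₀ ℕ) (hsq : ∀ i, d i ≤ 1) (S : Finset (Fin n))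
    (hs : d.support = S) : d = expOf S := by
  classical
  ext i
  rw [expOf_apply]
  by_cases hi : i ∈ S
  · rw [if_pos hi]
    have h1 : d i ≠ 0 := Finsupp.mem_support_iff.mp (by rw [hs]; exact hi)
    have h2 := hsq i
    omega
  · rw [if_neg hi]
    exact Finsupp.notMem_support_iff.mp (by rw [hs]; exact hi)

lemma eval_ind {n : ℕ} (A : MvPolynomial (Fin n) ℂ) (W : Finset (Fin n)) :
    eval (ind W) A = ∑ d ∈ A.support, (if d.support ⊆ W then coeff d A else 0) := by
  classical
  rw [eval_eq]
  refine Finset.sum_congr rfl fun d hd => ?_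
  by_cases h : d.support ⊆ W
  · rw [if_pos h]
    have : ∀ i ∈ d.support, ind W i ^ d i = 1 := by
      intro i hi
      rw [ind, if_pos (h hi), one_pow]
    rw [Finset.prod_congr rfl this, Finset.prod_const_one, mul_one]
  · rw [if_neg h]
    obtain ⟨i, hi, hiW⟩ := Finset.not_subset.mp h
    have : ind W i ^ d i = 0 := by
      rw [ind, if_neg hiW]
      exact zero_pow (Finsupp.mem_support_iff.mp hi)
    rw [Finset.prod_eq_zero hi this, mul_zero]

lemma cert_inner_sum {n : ℕ} (U F : Finset (Fin n)) :
    (∑ W ∈ U.powerset, if F ⊆ W then (-1:ℂ)^((U \ W).card) else 0)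
    = if F = U then 1 else 0 := by
  classical
  have reidx : (∑ W ∈ U.powerset, if F ⊆ W then (-1:ℂ)^((U \ W).card) else 0)
      = ∑ Y ∈ U.powerset, if F ⊆ U \ Y then (-1:ℂ)^(Y.card) else 0 := by
    refine Finset.sum_nbij' (fun W => U \ W) (fun Y => U \ Y) ?_ ?_ ?_ ?_ ?_
    · intro W hW; exact Finset.mem_powerset.mpr (Finset.sdiff_subset)
    · intro Y hY; exact Finset.mem_powerset.mpr (Finset.sdiff_subset)
    · intro W hW; exact Finset.sdiff_sdiff_eq_self (Finset.mem_powerset.mp hW)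
    · intro Y hY; exact Finset.sdiff_sdiff_eq_self (Finset.mem_powerset.mp hY)
    · intro W hW
      rw [Finset.sdiff_sdiff_eq_self (Finset.mem_powerset.mp hW)]
  rw [reidx]
  by_cases hFU : F ⊆ U
  · have hfil : ∀ Y ∈ U.powerset, (F ⊆ U \ Y) ↔ Y ∈ (U \ F).powerset := by
      intro Y hY
      rw [Finset.mem_powerset] at hY ⊢
      rw [Finset.subset_sdiff, Finset.subset_sdiff]
      constructor
      · rintro ⟨-, h⟩; exact ⟨hY, h.symm⟩
      · rintro ⟨-, h⟩; exact ⟨hFU, h.symm⟩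
    have : (∑ Y ∈ U.powerset, if F ⊆ U \ Y then (-1:ℂ)^(Y.card) else 0)
        = ∑ Y ∈ (U \ F).powerset, (-1:ℂ)^(Y.card) := by
      rw [← Finset.sum_filter]
      refine Finset.sum_congr ?_ (fun _ _ => rfl)
      ext Y
      simp only [Finset.mem_filter]
      constructor
      · rintro ⟨hY, h⟩; exact (hfil Y hY).mp h
      · intro hY
        have hYU : Y ∈ U.powerset := Finset.mem_powerset.mpr
          ((Finset.mem_powerset.mp hY).trans (Finset.sdiff_subset))
        exact ⟨hYU, (hfil Y hYU).mpr hY⟩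
    rw [this]
    have hz : (∑ Y ∈ (U \ F).powerset, (-1:ℂ)^(Y.card))
        = (((∑ Y ∈ (U \ F).powerset, (-1:ℤ)^(Y.card)) : ℤ) : ℂ) := by
      push_cast; rfl
    rw [hz, Finset.sum_powerset_neg_one_pow_card]
    by_cases h : F = U
    · rw [if_pos h, if_pos (by simp [h])]; norm_num
    · have : U \ F ≠ ∅ := by
        rw [Ne, Finset.sdiff_eq_empty_iff_subset]
        intro hUF
        exact h (Finset.Subset.antisymm hFU hUF)
      rw [if_neg this, if_neg h]; norm_num
  · have h1 : ∀ Y ∈ U.powerset, (if F ⊆ U \ Y then (-1:ℂ)^(Y.card) else 0) = 0 := by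
      intro Y hY
      rw [if_neg]
      intro h
      exact hFU (h.trans (Finset.sdiff_subset))
    rw [Finset.sum_congr rfl h1, Finset.sum_const_zero, if_neg]
    intro h
    exact hFU (h ▸ Finset.Subset.refl F)

lemma eval_cert_eq {n : ℕ} (G : SimpleGraph (Fin n)) [DecidableRel G.Adj] (r : ℕ)
    (A : MvPolynomial (Fin n) ℂ) (Q : Fin n → MvPolynomial (Fin n) ℂ)
    (Qe : Fin n × Fin n → MvPolynomial (Fin n) ℂ)
    (hcert : IsStableCert G r A Q Qe) (W : Finset (Fin n)) (hW : IsStableSet G W) :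
    eval (ind W) A * ((W.card : ℂ) - ((stabilityNumber G + r : ℕ) : ℂ)) = 1 := by
  classical
  have h := congrArg (eval (ind W)) hcert
  simp only [map_one, map_add, map_mul, map_sub, map_sum, map_pow, eval_X, eval_C] at h
  have hsum : (∑ i : Fin n, ind W i) = (W.card : ℂ) := by
    have hfil : Finset.univ.filter (fun i => i ∈ W) = W := by ext i; simp
    rw [show (fun i => ind W i) = fun i => if i ∈ W then (1:ℂ) else 0 from rfl]
    rw [Finset.sum_boole, hfil]
  have hQ : ∀ i : Fin n, ind W i ^ 2 - ind W i = 0 := by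
    intro i
    by_cases hi : i ∈ W <;> simp [ind, hi]
  have hE : ∀ p ∈ edgePairs G, ind W p.1 * ind W p.2 = 0 := by
    intro p hp
    have hadj : G.Adj p.1 p.2 := (Finset.mem_filter.mp hp).2.2
    by_cases h1 : p.1 ∈ W
    · by_cases h2 : p.2 ∈ W
      · exact absurd hadj (hW p.1 h1 p.2 h2)
      · simp [ind, h2]
    · simp [ind, h1]
  rw [hsum] at h
  simp only [hQ, mul_zero, Finset.sum_const_zero, add_zero] at h
  rw [Finset.sum_congr rfl (fun p hp => by rw [hE p hp, mul_zero])] at h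
  simp only [Finset.sum_const_zero, add_zero] at h
  exact h.symm

lemma coeff_expOf_eq {n : ℕ} (G : SimpleGraph (Fin n)) (A : MvPolynomial (Fin n) ℂ)
    (hred : IsReducedCoeff G A) (U : Finset (Fin n)) :
    coeff (expOf U) A = ∑ W ∈ U.powerset, (-1:ℂ)^((U \ W).card) * eval (ind W) A := by
  classical
  have step1 : (∑ W ∈ U.powerset, (-1:ℂ)^((U \ W).card) * eval (ind W) A)
      = ∑ W ∈ U.powerset, ∑ d ∈ A.support,
          (-1:ℂ)^((U \ W).card) * (if d.support ⊆ W then coeff d A else 0) := by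
    refine Finset.sum_congr rfl fun W _ => ?_
    rw [eval_ind, Finset.mul_sum]
  rw [step1, Finset.sum_comm]
  have step2 : ∀ d ∈ A.support,
      (∑ W ∈ U.powerset, (-1:ℂ)^((U \ W).card) * (if d.support ⊆ W then coeff d A else 0))
      = coeff d A * (if d.support = U then 1 else 0) := by
    intro d _
    have : ∀ W ∈ U.powerset,
        (-1:ℂ)^((U \ W).card) * (if d.support ⊆ W then coeff d A else 0)
        = coeff d A * (if d.support ⊆ W then (-1:ℂ)^((U \ W).card) else 0) := by
      intro W _
      by_cases h : d.support ⊆ W <;> simp [h, mul_comm]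
    rw [Finset.sum_congr rfl this, ← Finset.mul_sum, cert_inner_sum]
  rw [Finset.sum_congr rfl step2]
  have step3 : ∀ d ∈ A.support,
      coeff d A * (if d.support = U then 1 else 0)
      = if d = expOf U then coeff d A else 0 := by
    intro d hd
    by_cases h : d.support = U
    · rw [if_pos h, mul_one, if_pos (eq_expOf d (hred d hd).1 U h)]
    · rw [if_neg h, mul_zero, if_neg]
      intro he
      exact h (by rw [he, expOf_support])
  rw [Finset.sum_congr rfl step3, Finset.sum_ite_eq' A.support (expOf U) (fun d => coeff d A)]
  by_cases h : expOf U ∈ A.support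
  · rw [if_pos h]
  · rw [if_neg h]
    exact MvPolynomial.notMem_support_iff.mp h


theorem monomial_extension_in_reduced_certificate (n : ℕ) (G : SimpleGraph (Fin n))
    [DecidableRel G.Adj] (r : ℕ) (hr : 1 ≤ r)
    (A : MvPolynomial (Fin n) ℂ) (Q : Fin n → MvPolynomial (Fin n) ℂ)
    (Qe : Fin n × Fin n → MvPolynomial (Fin n) ℂ)
    (hcert : IsStableCert G r A Q Qe) (hred : IsReducedCoeff G A)
    (M : Finset (Fin n)) (hM : IsStableSet G M)
    (hmax : ∀ S : Finset (Fin n), IsStableSet G S → M ⊆ S → S = M)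
    (T : Finset (Fin n)) (hTM : T ⊆ M) (v : Fin n) (hvM : v ∈ M) (hvT : v ∉ T)
    (hT : MvPolynomial.coeff (expOf T) A ≠ 0) :
    MvPolynomial.coeff (expOf (insert v T)) A ≠ 0 := by
  classical
  have hUM : insert v T ⊆ M := Finset.insert_subset hvM hTM
  set c : ℂ := ((stabilityNumber G + r : ℕ) : ℂ) with hc
  set U := insert v T with hU
  set k := U.card with hk
  have hMcard : M.card ≤ stabilityNumber G := by
    apply Finset.le_sup
    rw [Finset.mem_filter]
    exact ⟨Finset.mem_powerset.mpr (Finset.subset_univ M), hM⟩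
  have hkle : k ≤ stabilityNumber G := le_trans (Finset.card_le_card hUM) hMcard
  have hnat : ∀ j : ℕ, j ≤ stabilityNumber G → (j:ℂ) ≠ c := by
    intro j hj h
    rw [hc, Nat.cast_inj] at h
    omega
  have hval : ∀ W ∈ U.powerset, eval (ind W) A = ((W.card:ℂ) - c)⁻¹ := by
    intro W hW
    have hWU : W ⊆ U := Finset.mem_powerset.mp hW
    have hWstab : IsStableSet G W := fun i hi j hj => hM i (hUM (hWU hi)) j (hUM (hWU hj))
    have h1 := eval_cert_eq G r A Q Qe hcert W hWstab
    exact eq_inv_of_mul_eq_one_left h1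
  have hform : coeff (expOf U) A
      = ∑ j ∈ Finset.range (k+1), k.choose j • ((-1:ℂ)^(k-j) * (((j:ℕ):ℂ) - c)⁻¹) := by
    rw [coeff_expOf_eq G A hred U]
    rw [Finset.sum_congr rfl (fun W hW => by
      rw [hval W hW, Finset.card_sdiff_of_subset (Finset.mem_powerset.mp hW)])]
    exact Finset.sum_powerset_apply_card (fun j => (-1:ℂ)^(k-j) * (((j:ℕ):ℂ) - c)⁻¹)
  have hSbform : coeff (expOf U) A = (-1:ℂ)^k * Sb k c := by
    rw [hform, Sb, Finset.mul_sum]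
    refine Finset.sum_congr rfl fun j hj => ?_
    have hjk : j ≤ k := Nat.lt_succ_iff.mp (Finset.mem_range.mp hj)
    have hpow : (-1:ℂ)^(k-j) = (-1)^k * (-1)^j := by
      have h2 : k - j + 2*j = k + j := by omega
      calc (-1:ℂ)^(k-j) = (-1)^(k-j) * ((-1)^2)^j := by norm_num
        _ = (-1)^(k-j+2*j) := by rw [← pow_mul, ← pow_add]
        _ = (-1)^(k+j) := by rw [h2]
        _ = (-1)^k * (-1)^j := by rw [pow_add]
    rw [nsmul_eq_mul, hpow, div_eq_mul_inv]
    ring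
  have hcond : ∀ j : ℕ, j ≤ k → (j:ℂ) ≠ c := fun j hj => hnat j (hj.trans hkle)
  have hkey := key k c hcond
  rw [hSbform]
  intro h
  have hSb0 : Sb k c = 0 := by
    rcases mul_eq_zero.mp h with h' | h'
    · exact absurd h' (pow_ne_zero k (by norm_num))
    · exact h'
  rw [hSb0, zero_mul] at hkey
  exact (Nat.cast_ne_zero.mpr (Nat.factorial_ne_zero k)) hkey.symm
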